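/- Let m be a positive integer with 2 dividing m but 4 not dividing m (2‖m). Let A, B ⊆ Z_m with A ∪ B = Z_m and |A ∩ B| = 4. Then R_A(n) = R_B(n) for all n ∈ Z_m if and only if B = A + m/2. -/

import Mathlib

open Finset

/-- Representation function: number of ordered pairs (a, a') in A × A with a + a' = n. -/
def repFn {m : ℕ} (A : Finset (ZMod m)) (n : ZMod m) : ℕ :=
  ((A ×ˢ A).filter (fun p => p.1 + p.2 = n)).card

lemma even_card_of_fpf_invol {α : Type*} [DecidableEq α] :
    ∀ (s : Finset α) (f : α → α), (∀ a ∈ s, f a ∈ s) → (∀ a ∈ s, f (f a) = a) →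
      (∀ a ∈ s, f a ≠ a) → Even s.card := by
  intro s
  induction s using Finset.strongInduction with
  | _ s ih =>
    intro f hmem hinv hne
    rcases s.eq_empty_or_nonempty with rfl | ⟨a, ha⟩
    · simp
    · have hfa : f a ∈ s := hmem a ha
      have hfa' : f a ≠ a := hne a ha
      have hfa2 : f a ∈ s.erase a := mem_erase.mpr ⟨hfa', hfa⟩
      set t := (s.erase a).erase (f a) with ht
      have hts : t ⊂ s := by
        refine Finset.ssubset_iff_of_subset ?_ |>.mpr ⟨a, ha, ?_⟩
        · exact (erase_subset _ _).trans (erase_subset _ _)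
        · simp [ht]
      have htmem : ∀ b ∈ t, b ∈ s ∧ b ≠ a ∧ b ≠ f a := by
        intro b hb
        simp only [ht, mem_erase] at hb
        exact ⟨hb.2.2, hb.2.1, hb.1⟩
      have hcl : ∀ b ∈ t, f b ∈ t := by
        intro b hb
        obtain ⟨hbs, hba, hbfa⟩ := htmem b hb
        have h1 : f b ∈ s := hmem b hbs
        have h2 : f b ≠ f a := fun h => hba (by rw [← hinv b hbs, h, hinv a ha])
        have h3 : f b ≠ a := fun h => hbfa (by rw [← hinv b hbs, h])
        simp only [ht, mem_erase]
        exact ⟨h2, h3, h1⟩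
      have hev : Even t.card :=
        ih t hts f hcl (fun b hb => hinv b (htmem b hb).1) (fun b hb => hne b (htmem b hb).1)
      have hc : t.card = s.card - 2 := by
        rw [ht, card_erase_of_mem hfa2, card_erase_of_mem ha]; omega
      have h2le : 2 ≤ s.card := Finset.one_lt_card.mpr ⟨a, ha, f a, hfa, hfa'.symm⟩
      obtain ⟨k, hk⟩ := hev
      exact ⟨k + 1, by omega⟩

lemma repFn_eq_sum {m : ℕ} [NeZero m] (A : Finset (ZMod m)) (n : ZMod m) :
    (repFn A n : ℤ) = ∑ x : ZMod m, (if x ∈ A then (1:ℤ) else 0) * (if n - x ∈ A then 1 else 0) := by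
  unfold repFn
  have h1 : ((A ×ˢ A).filter (fun p => p.1 + p.2 = n)).card
      = (univ.filter (fun x : ZMod m => x ∈ A ∧ n - x ∈ A)).card := by
    apply Finset.card_nbij' (i := fun p => p.1) (j := fun x => (x, n - x))
    · intro p hp
      simp only [mem_coe, mem_filter, mem_product] at hp ⊢
      refine ⟨mem_univ _, hp.1.1, ?_⟩
      rw [← hp.2]; simpa using hp.1.2
    · intro x hx
      simp only [mem_coe, mem_filter, mem_univ, true_and, mem_product] at hx ⊢
      exact ⟨⟨hx.1, hx.2⟩, by ring⟩
    · intro p hp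
      simp only [mem_coe, mem_filter, mem_product] at hp
      have : n - p.1 = p.2 := by rw [← hp.2]; ring
      show (p.1, n - p.1) = p
      rw [this]
    · intro x hx; rfl
  rw [h1, Finset.card_filter]
  push_cast
  apply Finset.sum_congr rfl
  intro x _
  split_ifs <;> simp_all

theorem stmt8 (m : ℕ) [NeZero m] (h2 : 2 ∣ m) (h4 : ¬ 4 ∣ m)
    (A B : Finset (ZMod m)) (hU : A ∪ B = Finset.univ) (hI : (A ∩ B).card = 4) :
    (∀ n : ZMod m, repFn A n = repFn B n) ↔
      B = A.image (fun x => x + ((m / 2 : ℕ) : ZMod m)) := by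
  have hm0 : m ≠ 0 := NeZero.ne m
  set c : ZMod m := ((m / 2 : ℕ) : ZMod m) with hcdef
  have hm2 : m = 2 * (m / 2) := (Nat.mul_div_cancel' h2).symm
  have hcodd : Odd (m / 2) := by
    rcases Nat.even_or_odd (m / 2) with he | ho
    · obtain ⟨j, hj⟩ := he
      exact absurd ⟨j, by omega⟩ h4
    · exact ho
  have hcc : c + c = 0 := by
    rw [hcdef, ← Nat.cast_add, show m / 2 + m / 2 = m by omega, ZMod.natCast_self]
  have hnegc : -c = c := by
    rw [neg_eq_iff_add_eq_zero, hcc]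
  have hc0 : c ≠ 0 := by
    intro h
    rw [hcdef, ZMod.natCast_eq_zero_iff] at h
    have := Nat.le_of_dvd (by omega) h
    omega
  have hker : ∀ x : ZMod m, x + x = 0 → x = 0 ∨ x = c := by
    intro x hx
    have hv : ((x.val + x.val : ℕ) : ZMod m) = 0 := by
      push_cast [ZMod.natCast_zmod_val]
      exact hx
    rw [ZMod.natCast_eq_zero_iff] at hv
    have hvlt : x.val < m := ZMod.val_lt x
    obtain ⟨k, hk⟩ := hv
    have hk2 : k < 2 := by
      by_contra hk2
      have : 2 * m ≤ m * k := by
        calc 2 * m = m * 2 := by ring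
        _ ≤ m * k := Nat.mul_le_mul_left m (by omega)
      omega
    have hval : x.val = 0 ∨ x.val = m / 2 := by
      interval_cases k <;> omega
    rcases hval with h | h
    · left; rw [← ZMod.natCast_zmod_val x, h]; simp
    · right; rw [← ZMod.natCast_zmod_val x, h]
  constructor
  · intro heq
    classical
    set ε : ZMod m → ℤ := fun x => (if x ∈ A then 1 else 0) - (if x ∈ B then 1 else 0) with hεdef
    set sf : ZMod m → ℤ := fun x => (if x ∈ A then 1 else 0) + (if x ∈ B then 1 else 0) with hsfdef
    have hUx : ∀ x : ZMod m, x ∈ A ∨ x ∈ B := by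
      intro x
      have : x ∈ A ∪ B := by rw [hU]; exact mem_univ x
      exact mem_union.mp this
    -- reindexing lemma
    have hre : ∀ (f g : ZMod m → ℤ) (n : ZMod m),
        ∑ x : ZMod m, f x * g (n - x) = ∑ x : ZMod m, g x * f (n - x) := by
      intro f g n
      apply Fintype.sum_equiv (Equiv.subLeft n)
      intro x
      simp only [Equiv.subLeft_apply, sub_sub_cancel]
      ring
    have hre1 : ∀ (f : ZMod m → ℤ) (n : ZMod m),
        ∑ x : ZMod m, f (n - x) = ∑ x : ZMod m, f x := by
      intro f n
      apply Fintype.sum_equiv (Equiv.subLeft n)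
      intro x
      simp
    -- main identity
    have key : ∀ n : ZMod m, ∑ x : ZMod m, sf x * ε (n - x) = 0 := by
      intro n
      have h1 : (2 : ℤ) * ((repFn A n : ℤ) - (repFn B n : ℤ))
          = ∑ x : ZMod m, (sf x * ε (n - x) + ε x * sf (n - x)) := by
        rw [repFn_eq_sum, repFn_eq_sum, ← Finset.sum_sub_distrib, Finset.mul_sum]
        apply Finset.sum_congr rfl
        intro x _
        simp only [hεdef, hsfdef]
        ring
      rw [Finset.sum_add_distrib, hre ε sf n] at h1
      have h2 : (repFn A n : ℤ) = (repFn B n : ℤ) := by exact_mod_cast heq n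
      have : (2:ℤ) * ∑ x : ZMod m, sf x * ε (n - x) = 0 := by linarith
      linarith
    set S : ℤ := ∑ x : ZMod m, ε x with hSdef
    have keyI : ∀ n : ZMod m, S + ∑ t ∈ A ∩ B, ε (n - t) = 0 := by
      intro n
      have h1 : ∀ x : ZMod m, sf x = 1 + (if x ∈ A ∩ B then 1 else 0) := by
        intro x
        by_cases h2 : x ∈ A <;> by_cases h3 : x ∈ B
        · simp [hsfdef, mem_inter, h2, h3]
        · simp [hsfdef, mem_inter, h2, h3]
        · simp [hsfdef, mem_inter, h2, h3]
        · rcases hUx x with h | h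
          · exact absurd h h2
          · exact absurd h h3
      have h2 := key n
      calc S + ∑ t ∈ A ∩ B, ε (n - t)
          = ∑ x : ZMod m, ε (n - x) + ∑ x : ZMod m, (if x ∈ A ∩ B then 1 else 0) * ε (n - x) := by
            rw [hre1 ε n]
            congr 1
            rw [← Fintype.sum_ite_mem (A ∩ B) (fun t => ε (n - t))]
            apply Finset.sum_congr rfl
            intro x _
            rw [ite_mul, one_mul, zero_mul]
        _ = ∑ x : ZMod m, sf x * ε (n - x) := by
            rw [← Finset.sum_add_distrib]
            apply Finset.sum_congr rfl
            intro x _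
            rw [h1 x]
            ring
        _ = 0 := h2
    -- sum of ε over any translate equals S
    have hStrans : ∀ t : ZMod m, ∑ n : ZMod m, ε (n - t) = S := by
      intro t
      rw [hSdef]
      exact (Fintype.sum_equiv (Equiv.addRight t) ε (fun n => ε (n - t))
        (fun x => by simp)).symm
    have hS0 : S = 0 := by
      have h0 : (0 : ℤ) = (m : ℤ) * S + 4 * S := by
        calc (0 : ℤ) = ∑ n : ZMod m, (S + ∑ t ∈ A ∩ B, ε (n - t)) := by
              rw [Finset.sum_congr rfl (fun n _ => keyI n)]
              simp
          _ = ∑ _n : ZMod m, S + ∑ n : ZMod m, ∑ t ∈ A ∩ B, ε (n - t) := Finset.sum_add_distrib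
          _ = (m : ℤ) * S + 4 * S := by
              congr 1
              · rw [Finset.sum_const, nsmul_eq_mul]
                congr 1
                simp [ZMod.card]
              · rw [Finset.sum_comm]
                rw [Finset.sum_congr rfl (fun t _ => hStrans t)]
                rw [Finset.sum_const, hI, nsmul_eq_mul]
                norm_num
      have hfs : ((m : ℤ) + 4) * S = 0 := by linarith
      rcases mul_eq_zero.mp hfs with h | h
      · exfalso
        have : (0:ℤ) ≤ (m:ℤ) := Int.natCast_nonneg m
        omega
      · exact h
    have E : ∀ n : ZMod m, ∑ t ∈ A ∩ B, ε (n - t) = 0 := by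
      intro n
      have := keyI n
      omega
    have hεI : ∀ x : ZMod m, ε x = 0 ↔ x ∈ A ∩ B := by
      intro x
      by_cases hA : x ∈ A <;> by_cases hB : x ∈ B
      · simp [hεdef, mem_inter, hA, hB]
      · simp [hεdef, mem_inter, hA, hB]
      · simp [hεdef, mem_inter, hA, hB]
      · rcases hUx x with h | h
        · exact absurd h hA
        · exact absurd h hB
    have hpar : ∀ n : ZMod m, Even (((A ∩ B).filter (fun t => n - t ∈ A ∩ B)).card) := by
      intro n
      have h1 : ((∑ t ∈ A ∩ B, ε (n - t) : ℤ) : ZMod 2) = 0 := by rw [E n]; simp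
      push_cast at h1
      have h2 : ∀ t ∈ A ∩ B, ((ε (n - t) : ℤ) : ZMod 2) = if n - t ∈ A ∩ B then 0 else 1 := by
        intro t _
        by_cases h : n - t ∈ A ∩ B
        · rw [if_pos h, (hεI _).mpr h]
          simp
        · rw [if_neg h]
          rcases hUx (n - t) with hA | hB
          · have hB' : n - t ∉ B := fun hB => h (mem_inter.mpr ⟨hA, hB⟩)
            simp [hεdef, hA, hB']
          · have hA' : n - t ∉ A := fun hA => h (mem_inter.mpr ⟨hA, hB⟩)
            simp [hεdef, hA', hB]
      rw [Finset.sum_congr rfl h2] at h1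
      have h3 : ∑ t ∈ A ∩ B, (if n - t ∈ A ∩ B then (0 : ZMod 2) else 1)
          = (((A ∩ B).filter (fun t => ¬ (n - t ∈ A ∩ B))).card : ZMod 2) := by
        rw [Finset.card_filter]
        push_cast
        apply Finset.sum_congr rfl
        intro t _
        split_ifs <;> rfl
      rw [h3] at h1
      have h4 : (2 : ℕ) ∣ ((A ∩ B).filter (fun t => ¬ (n - t ∈ A ∩ B))).card := by
        rwa [ZMod.natCast_eq_zero_iff] at h1
      have h5 := Finset.card_filter_add_card_filter_not
        (s := A ∩ B) (p := fun t => n - t ∈ A ∩ B)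
      rw [hI] at h5
      rw [Nat.even_iff]
      omega
    have hclose : ∀ t0 ∈ A ∩ B, t0 + c ∈ A ∩ B := by
      intro t0 ht0
      by_contra hcon
      set n := t0 + t0 with hn
      set F := (A ∩ B).filter (fun t => n - t ∈ A ∩ B) with hF
      have hFsub : F ⊆ A ∩ B := filter_subset _ _
      have hF0 : t0 ∈ F := by
        rw [hF, mem_filter]
        exact ⟨ht0, by rw [hn, add_sub_cancel_right]; exact ht0⟩
      have heven := hpar n
      rw [← hF] at heven
      have hfix : ∀ b : ZMod m, b + b = n → b = t0 ∨ b = t0 + c := by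
        intro b hb
        have : (b - t0) + (b - t0) = 0 := by
          rw [hn] at hb
          linear_combination hb
        rcases hker _ this with h | h
        · left; exact sub_eq_zero.mp h
        · right
          have : b = c + t0 := (sub_eq_iff_eq_add).mp h
          rw [this]; ring
      -- F.erase t0 has a fixed-point-free involution t ↦ n - t
      have hFmem : ∀ b ∈ F, b ∈ A ∩ B ∧ n - b ∈ A ∩ B := by
        intro b hb
        rw [hF, mem_filter] at hb
        exact hb
      have hodd : Even ((F.erase t0).card) := by
        apply even_card_of_fpf_invol (F.erase t0) (fun t => n - t)
        · intro b hb
          rw [mem_erase] at hb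
          obtain ⟨hb1, hb2⟩ := hb
          obtain ⟨hbI, hbnI⟩ := hFmem b hb2
          rw [mem_erase]
          refine ⟨?_, ?_⟩
          · intro hcontra
            apply hb1
            have : b = n - t0 := by rw [← hcontra]; ring
            rw [this, hn]; ring
          · rw [hF, mem_filter]
            exact ⟨hbnI, by rw [sub_sub_cancel]; exact hbI⟩
        · intro b _
          rw [sub_sub_cancel]
        · intro b hb
          rw [mem_erase] at hb
          obtain ⟨hb1, hb2⟩ := hb
          intro hcontra
          have hbb : b + b = n := by linear_combination -hcontra
          rcases hfix b hbb with h | h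
          · exact hb1 h
          · apply hcon
            rw [← h]
            exact (hFmem b hb2).1
      have hcard : F.card = (F.erase t0).card + 1 := by
        rw [card_erase_of_mem hF0]
        have : 0 < F.card := card_pos.mpr ⟨t0, hF0⟩
        omega
      rw [Nat.even_iff] at heven hodd
      omega
    -- extract a, b with I = {a, a+c, b, b+c}
    have hIne : (A ∩ B).Nonempty := card_pos.mp (by rw [hI]; norm_num)
    obtain ⟨a, ha⟩ := hIne
    have ha2 : a + c ∈ A ∩ B := hclose a ha
    have hane : a + c ≠ a := by
      intro h
      exact hc0 (by rwa [add_eq_left] at h)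
    have hpairsub : ({a, a + c} : Finset (ZMod m)) ⊆ A ∩ B := by
      intro x hx
      rcases mem_insert.mp hx with rfl | hx
      · exact ha
      · rw [mem_singleton.mp hx]; exact ha2
    have hsd : ((A ∩ B) \ {a, a + c}).Nonempty := by
      apply card_pos.mp
      rw [card_sdiff_of_subset hpairsub, hI]
      rw [card_insert_of_notMem (by simp [hane.symm]), card_singleton]
      norm_num
    obtain ⟨b, hb⟩ := hsd
    rw [mem_sdiff, mem_insert, mem_singleton] at hb
    obtain ⟨hbI, hbne⟩ := hb
    push_neg at hbne
    obtain ⟨hba, hbac⟩ := hbne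
    have hb2 : b + c ∈ A ∩ B := hclose b hbI
    have hd1 : b + c ≠ a := by
      intro h
      apply hbac
      have h' : b + c + c = a + c := by rw [h]
      rwa [add_assoc, hcc, add_zero] at h'
    have hd2 : b + c ≠ a + c := fun h => hba (add_right_cancel h)
    have hd3 : b + c ≠ b := by
      intro h
      exact hc0 (by rwa [add_eq_left] at h)
    have hIeq : A ∩ B = {a, a + c, b, b + c} := by
      symm
      apply Finset.eq_of_subset_of_card_le
      · intro x hx
        rcases mem_insert.mp hx with rfl | hx
        · exact ha
        rcases mem_insert.mp hx with rfl | hx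
        · exact ha2
        rcases mem_insert.mp hx with rfl | hx
        · exact hbI
        · rw [mem_singleton.mp hx]; exact hb2
      · rw [hI]
        rw [card_insert_of_notMem, card_insert_of_notMem, card_insert_of_notMem,
          card_singleton]
        · simp [hd3.symm]
        · simp [hbac.symm, hd2.symm]
        · simp [hane.symm, hba.symm, hd1.symm]
    have hnma : a ∉ ({a + c, b, b + c} : Finset (ZMod m)) := by
      simp [hane.symm, hba.symm, hd1.symm]
    have hnmac : (a + c) ∉ ({b, b + c} : Finset (ZMod m)) := by
      simp [hbac.symm, hd2.symm]
    have hnmb : b ∉ ({b + c} : Finset (ZMod m)) := by simp [hd3.symm]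
    have hsum4 : ∀ n : ZMod m,
        ε (n - a) + (ε (n - (a + c)) + (ε (n - b) + ε (n - (b + c)))) = 0 := by
      intro n
      have h := E n
      rw [hIeq, Finset.sum_insert hnma, Finset.sum_insert hnmac,
        Finset.sum_insert hnmb, Finset.sum_singleton] at h
      exact h
    -- the function g and its properties
    set g : ZMod m → ℤ := fun x => ε x + ε (x + c) with hgdef
    have hgc : ∀ x : ZMod m, g (x + c) = g x := by
      intro x
      simp only [hgdef]
      rw [add_assoc, hcc, add_zero]
      ring
    have hgd : ∀ x : ZMod m, g (x + (a - b)) = - g x := by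
      intro x
      have h := hsum4 (x + a)
      have e1 : x + a - a = x := by ring
      have e2 : x + a - (a + c) = x + c := by
        rw [show x + a - (a + c) = x - c by ring, sub_eq_add_neg, hnegc]
      have e3 : x + a - b = x + (a - b) := by ring
      have e4 : x + a - (b + c) = x + (a - b) + c := by
        rw [show x + a - (b + c) = x + (a - b) - c by ring, sub_eq_add_neg, hnegc]
      rw [e1, e2, e3, e4] at h
      simp only [hgdef]
      linarith
    have hgk : ∀ (k : ℕ) (x : ZMod m), g (x + k • (a - b)) = (-1) ^ k * g x := by
      intro k
      induction k with
      | zero => intro x; simp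
      | succ k ih =>
        intro x
        have e : x + (k + 1) • (a - b) = (x + k • (a - b)) + (a - b) := by
          rw [succ_nsmul]; ring
        rw [e, hgd, ih]
        ring
    have hgj : ∀ (j : ℕ) (x : ZMod m), g (x + j • c) = g x := by
      intro j
      induction j with
      | zero => intro x; simp
      | succ j ih =>
        intro x
        have e : x + (j + 1) • c = (x + j • c) + c := by
          rw [succ_nsmul]; ring
        rw [e, hgc, ih]
    have hgz : ∀ x : ZMod m, g x = 0 := by
      intro x
      have h1 : g (x + (m / 2) • (a - b)) = -(g x) := by
        rw [hgk (m / 2) x, Odd.neg_one_pow hcodd]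
        ring
      have h2 : g (x + (m / 2) • (a - b)) = g x := by
        have e : (m / 2) • (a - b) = ((a - b).val) • c := by
          rw [nsmul_eq_mul, nsmul_eq_mul, ZMod.natCast_zmod_val, ← hcdef, mul_comm]
        rw [e, hgj]
      linarith
    have hflip : ∀ x : ZMod m, ε (x + c) = - ε x := by
      intro x
      have := hgz x
      simp only [hgdef] at this
      linarith
    -- conclude
    have hAc : ∀ x : ZMod m, x ∈ B ↔ x + c ∈ A := by
      intro x
      constructor
      · intro hxB
        by_cases hxA : x ∈ A
        · exact (mem_inter.mp (hclose x (mem_inter.mpr ⟨hxA, hxB⟩))).1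
        · have h1 : ε x = -1 := by simp [hεdef, hxA, hxB]
          have h2 : ε (x + c) = 1 := by rw [hflip, h1]; ring
          by_contra hc2
          simp only [hεdef, if_neg hc2] at h2
          split_ifs at h2 <;> norm_num at h2
      · intro hA'
        by_cases hxB : x + c ∈ B
        · have h := hclose _ (mem_inter.mpr ⟨hA', hxB⟩)
          rw [add_assoc, hcc, add_zero] at h
          exact (mem_inter.mp h).2
        · have h1 : ε (x + c) = 1 := by simp [hεdef, hA', hxB]
          have h2 : ε x = -1 := by
            have := hflip x
            omega
          by_contra hc2
          simp only [hεdef, if_neg hc2] at h2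
          split_ifs at h2 <;> norm_num at h2
    ext x
    rw [mem_image]
    constructor
    · intro hxB
      exact ⟨x + c, (hAc x).mp hxB, by rw [add_assoc, hcc, add_zero]⟩
    · rintro ⟨y, hy, rfl⟩
      apply (hAc (y + c)).mpr
      rwa [add_assoc, hcc, add_zero]
  · -- backward direction
    intro hB n
    unfold repFn
    apply Finset.card_nbij' (i := fun p => (p.1 + c, p.2 + c)) (j := fun p => (p.1 + c, p.2 + c))
    · intro p hp
      simp only [mem_coe, mem_filter, mem_product] at hp ⊢
      refine ⟨⟨?_, ?_⟩, ?_⟩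
      · rw [hB, mem_image]; exact ⟨p.1, hp.1.1, rfl⟩
      · rw [hB, mem_image]; exact ⟨p.2, hp.1.2, rfl⟩
      · rw [show p.1 + c + (p.2 + c) = p.1 + p.2 + (c + c) by ring, hcc, add_zero, hp.2]
    · intro q hq
      simp only [mem_coe, mem_filter, mem_product] at hq ⊢
      have h1 : q.1 + c ∈ A := by
        have := hq.1.1
        rw [hB, mem_image] at this
        obtain ⟨y, hy, hy2⟩ := this
        rw [← hy2, show y + c + c = y + (c + c) by ring, hcc, add_zero]
        exact hy
      have h2 : q.2 + c ∈ A := by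
        have := hq.1.2
        rw [hB, mem_image] at this
        obtain ⟨y, hy, hy2⟩ := this
        rw [← hy2, show y + c + c = y + (c + c) by ring, hcc, add_zero]
        exact hy
      refine ⟨⟨h1, h2⟩, ?_⟩
      rw [show q.1 + c + (q.2 + c) = q.1 + q.2 + (c + c) by ring, hcc, add_zero, hq.2]
    · intro p _
      have e1 : p.1 + c + c = p.1 := by rw [add_assoc, hcc, add_zero]
      have e2 : p.2 + c + c = p.2 := by rw [add_assoc, hcc, add_zero]
      simp [e1, e2]
    · intro q _
      have e1 : q.1 + c + c = q.1 := by rw [add_assoc, hcc, add_zero]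
      have e2 : q.2 + c + c = q.2 := by rw [add_assoc, hcc, add_zero]
      simp [e1, e2]
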